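/- Let f be a finite Blaschke product of degree s ≥ 2 such that f^t is totally ramified for some integer t ≥ 2 (i.e., f^t is associated to z^{s^t} via pre- and post-composition with disk automorphisms). Then there exist p in the unit disk and ρ on the unit circle such that f = ι_p ∘ (ρ z^s) ∘ ι_{-p}, where ι_p(z) = (z + p)/(1 + conj(p)·z). -/

import Mathlib

/-- The open unit disk in `ℂ`. -/
def unitDisk : Set ℂ := Metric.ball 0 1

/-- The rational function `ρ · ∏ᵢ (z - aᵢ)/(1 - conj(aᵢ)·z)`. -/
noncomputable def blaschkeFun (ρ : ℂ) (l : List ℂ) (z : ℂ) : ℂ :=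
  ρ * (l.map fun a => (z - a) / (1 - (starRingEnd ℂ) a * z)).prod

/-- `f` is a finite Blaschke product of degree `n`. -/
def IsBlaschke (n : ℕ) (f : ℂ → ℂ) : Prop :=
  ∃ (ρ : ℂ) (l : List ℂ), ‖ρ‖ = 1 ∧ (∀ a ∈ l, ‖a‖ < 1) ∧
    l.length = n ∧ ∀ z, f z = blaschkeFun ρ l z

/-- `f` is a holomorphic automorphism of the unit disk, i.e. a degree one
Blaschke product. -/
def IsDiskAut (f : ℂ → ℂ) : Prop := IsBlaschke 1 f

/-- `f` is totally ramified of degree `n`: it is associated to `z ^ n` via pre-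
and post-composition with disk automorphisms. -/
def IsTotallyRamified (n : ℕ) (f : ℂ → ℂ) : Prop :=
  ∃ ε δ : ℂ → ℂ, IsDiskAut ε ∧ IsDiskAut δ ∧
    Set.EqOn f (ε ∘ (fun z => z ^ n) ∘ δ) unitDisk

/-- The disk automorphism `ι_p(z) = (z + p)/(1 + conj(p)·z)`. -/
noncomputable def iotaAut (p : ℂ) (z : ℂ) : ℂ := (z + p) / (1 + (starRingEnd ℂ) p * z)


lemma key_identity (a z : ℂ) :
    Complex.normSq (1 - (starRingEnd ℂ) a * z) - Complex.normSq (z - a)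
      = (1 - Complex.normSq a) * (1 - Complex.normSq z) := by
  simp [Complex.normSq_apply, Complex.sub_re, Complex.sub_im, Complex.mul_re, Complex.mul_im,
    Complex.conj_re, Complex.conj_im]
  ring

lemma normSq_lt_one (z : ℂ) (h : ‖z‖ < 1) : Complex.normSq z < 1 := by
  have := Complex.sq_norm z
  nlinarith [norm_nonneg z]

lemma den_ne_zero {a z : ℂ} (ha : ‖a‖ < 1) (hz : ‖z‖ < 1) :
    1 - (starRingEnd ℂ) a * z ≠ 0 := by
  intro h
  have h1 : (starRingEnd ℂ) a * z = 1 := by linear_combination -h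
  have : ‖(starRingEnd ℂ) a * z‖ = 1 := by rw [h1]; simp
  rw [norm_mul, Complex.norm_conj] at this
  nlinarith [norm_nonneg a, norm_nonneg z]

lemma factor_lt_one {a z : ℂ} (ha : ‖a‖ < 1) (hz : ‖z‖ < 1) :
    ‖(z - a) / (1 - (starRingEnd ℂ) a * z)‖ < 1 := by
  have hd := den_ne_zero ha hz
  rw [norm_div, div_lt_one (by simpa [norm_pos_iff] using hd)]
  rw [Complex.norm_def, Complex.norm_def]
  apply Real.sqrt_lt_sqrt (Complex.normSq_nonneg _)
  have := key_identity a z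
  have h1 := normSq_lt_one a ha
  have h2 := normSq_lt_one z hz
  nlinarith

lemma factor_ge_one {a z : ℂ} (ha : ‖a‖ < 1) (hz : 1 ≤ ‖z‖) :
    ‖1 - (starRingEnd ℂ) a * z‖ ≤ ‖z - a‖ := by
  rw [Complex.norm_def, Complex.norm_def]
  apply Real.sqrt_le_sqrt
  have := key_identity a z
  have h1 := normSq_lt_one a ha
  have h2 : 1 ≤ Complex.normSq z := by
    have := Complex.sq_norm z
    nlinarith
  nlinarith

lemma prod_abs_le_one {l : List ℂ} {z : ℂ} (ha : ∀ a ∈ l, ‖a‖ < 1)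
    (hz : ‖z‖ < 1) :
    ‖(l.map fun a => (z - a) / (1 - (starRingEnd ℂ) a * z)).prod‖ ≤ 1 := by
  induction l with
  | nil => simp
  | cons a l ih =>
    simp only [List.map_cons, List.prod_cons, norm_mul]
    have h1 := factor_lt_one (ha a (by simp)) hz
    have h2 := ih (fun b hb => ha b (by simp [hb]))
    nlinarith [norm_nonneg ((l.map fun a => (z - a) / (1 - (starRingEnd ℂ) a * z)).prod),
      norm_nonneg ((z - a) / (1 - (starRingEnd ℂ) a * z))]

lemma blaschke_mapsTo {ρ : ℂ} {l : List ℂ} (hρ : ‖ρ‖ = 1)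
    (ha : ∀ a ∈ l, ‖a‖ < 1) (hl : l ≠ []) {z : ℂ} (hz : ‖z‖ < 1) :
    ‖blaschkeFun ρ l z‖ < 1 := by
  obtain ⟨a, l, rfl⟩ : ∃ a l', l = a :: l' := by
    cases l with
    | nil => exact absurd rfl hl
    | cons a l => exact ⟨a, l, rfl⟩
  simp only [blaschkeFun, List.map_cons, List.prod_cons, norm_mul, hρ, one_mul]
  have h1 := factor_lt_one (ha a (by simp)) hz
  have h2 := prod_abs_le_one (l := l) (fun b hb => ha b (by simp [hb])) hz
  nlinarith [norm_nonneg ((l.map fun a => (z - a) / (1 - (starRingEnd ℂ) a * z)).prod),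
    norm_nonneg ((z - a) / (1 - (starRingEnd ℂ) a * z))]

noncomputable def Pp (ρ : ℂ) (l : List ℂ) : Polynomial ℂ :=
  Polynomial.C ρ * (l.map fun a => Polynomial.X - Polynomial.C a).prod

noncomputable def Qp (l : List ℂ) : Polynomial ℂ :=
  (l.map fun a => 1 - Polynomial.C ((starRingEnd ℂ) a) * Polynomial.X).prod

lemma Pp_eval (ρ : ℂ) (l : List ℂ) (z : ℂ) :
    (Pp ρ l).eval z = ρ * (l.map fun a => z - a).prod := by
  simp [Pp, Polynomial.eval_list_prod, List.map_map, Function.comp_def]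

lemma Qp_eval (l : List ℂ) (z : ℂ) :
    (Qp l).eval z = (l.map fun a => 1 - (starRingEnd ℂ) a * z).prod := by
  simp [Qp, Polynomial.eval_list_prod, List.map_map, Function.comp_def]

lemma Qp_eval_ne_zero {l : List ℂ} (ha : ∀ a ∈ l, ‖a‖ < 1) {z : ℂ}
    (hz : ‖z‖ < 1) : (Qp l).eval z ≠ 0 := by
  rw [Qp_eval]
  induction l with
  | nil => simp
  | cons a l ih =>
    simp only [List.map_cons, List.prod_cons]
    exact mul_ne_zero (den_ne_zero (ha a (by simp)) hz)
      (ih (fun b hb => ha b (by simp [hb])))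

lemma list_prod_div (g h : ℂ → ℂ) (l : List ℂ) :
    (l.map fun a => g a / h a).prod = (l.map g).prod / (l.map h).prod := by
  induction l with
  | nil => simp
  | cons a l ih => simp only [List.map_cons, List.prod_cons, ih, div_mul_div_comm]

lemma blaschke_eq_div (ρ : ℂ) (l : List ℂ) (z : ℂ) :
    blaschkeFun ρ l z = (Pp ρ l).eval z / (Qp l).eval z := by
  rw [Pp_eval, Qp_eval, blaschkeFun, list_prod_div, mul_div_assoc]

open Polynomial in
lemma Qp_natDegree_le (l : List ℂ) : (Qp l).natDegree ≤ l.length := by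
  refine le_trans (Polynomial.natDegree_list_prod_le _) ?_
  rw [List.map_map]
  refine le_trans (List.sum_le_card_nsmul _ 1 ?_) (by simp)
  intro x hx
  simp only [List.mem_map, Function.comp] at hx
  obtain ⟨a, _, rfl⟩ := hx
  refine le_trans (Polynomial.natDegree_sub_le _ _) ?_
  simp [Polynomial.natDegree_C_mul_le]
  exact le_trans (Polynomial.natDegree_mul_le) (by simp)

open Polynomial in
lemma P1_natDegree_le (l : List ℂ) : ((l.map fun a => (X : ℂ[X]) - C a).prod).natDegree ≤ l.length := by
  refine le_trans (Polynomial.natDegree_list_prod_le _) ?_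
  rw [List.map_map]
  refine le_trans (List.sum_le_card_nsmul _ 1 ?_) (by simp)
  intro x hx
  simp only [List.mem_map, Function.comp] at hx
  obtain ⟨a, _, rfl⟩ := hx
  exact Polynomial.natDegree_X_sub_C_le _

open Polynomial in
lemma Qp_coeff_top (l : List ℂ) :
    (Qp l).coeff l.length = (l.map fun a => -(starRingEnd ℂ) a).prod := by
  induction l with
  | nil => simp [Qp]
  | cons a l ih =>
    have hrw : Qp (a :: l) = Qp l - C ((starRingEnd ℂ) a) * (X * Qp l) := by
      simp only [Qp, List.map_cons, List.prod_cons]; ring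
    rw [hrw]
    simp only [List.length_cons, Polynomial.coeff_sub, Polynomial.coeff_C_mul,
      Polynomial.coeff_X_mul, ih, List.map_cons, List.prod_cons]
    rw [Polynomial.coeff_eq_zero_of_natDegree_lt (lt_of_le_of_lt (Qp_natDegree_le l) (by omega))]
    ring

open Polynomial in
lemma P1_coeff_top (l : List ℂ) :
    ((l.map fun a => (X : ℂ[X]) - C a).prod).coeff l.length = 1 := by
  induction l with
  | nil => simp
  | cons a l ih =>
    have hrw : ((a :: l).map fun a => (X : ℂ[X]) - C a).prod
        = X * ((l.map fun a => (X : ℂ[X]) - C a).prod)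
          - C a * ((l.map fun a => (X : ℂ[X]) - C a).prod) := by
      simp only [List.map_cons, List.prod_cons]; ring
    rw [hrw]
    simp only [List.length_cons, Polynomial.coeff_sub, Polynomial.coeff_C_mul,
      Polynomial.coeff_X_mul, ih]
    rw [Polynomial.coeff_eq_zero_of_natDegree_lt (lt_of_le_of_lt (P1_natDegree_le l) (by omega))]
    ring

lemma abs_prod_neg_conj_le_one {l : List ℂ} (ha : ∀ a ∈ l, ‖a‖ < 1) :
    ‖(l.map fun a => -(starRingEnd ℂ) a).prod‖ ≤ 1 := by
  induction l with
  | nil => simp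
  | cons a l ih =>
    simp only [List.map_cons, List.prod_cons, norm_mul]
    have h1 : ‖-(starRingEnd ℂ) a‖ ≤ 1 := by
      simpa using le_of_lt (ha a (by simp))
    have h2 := ih (fun b hb => ha b (by simp [hb]))
    nlinarith [norm_nonneg (-(starRingEnd ℂ) a),
      norm_nonneg ((l.map fun a => -(starRingEnd ℂ) a).prod)]

lemma list_abs_prod_le (g h : ℂ → ℂ) {l : List ℂ}
    (hle : ∀ a ∈ l, ‖g a‖ ≤ ‖h a‖) :
    ‖(l.map g).prod‖ ≤ ‖(l.map h).prod‖ := by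
  induction l with
  | nil => simp
  | cons a l ih =>
    simp only [List.map_cons, List.prod_cons, norm_mul]
    exact mul_le_mul (hle a (by simp)) (ih (fun b hb => hle b (by simp [hb])))
      (norm_nonneg _) (norm_nonneg _)

open Polynomial in
lemma factor_A {ρ w₀ : ℂ} {l : List ℂ} (hρ : ‖ρ‖ = 1)
    (ha : ∀ a ∈ l, ‖a‖ < 1) (hw : ‖w₀‖ < 1)
    (hinj : ∀ z : ℂ, ‖z‖ < 1 → blaschkeFun ρ l z = w₀ → z = w₀) :
    ∃ c : ℂ, c ≠ 0 ∧ Pp ρ l - C w₀ * Qp l = C c * (X - C w₀) ^ l.length := by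
  set A : ℂ[X] := Pp ρ l - C w₀ * Qp l with hA
  have hcoeff : A.coeff l.length = ρ - w₀ * (l.map fun a => -(starRingEnd ℂ) a).prod := by
    simp only [hA, Polynomial.coeff_sub, Polynomial.coeff_C_mul, Qp_coeff_top]
    congr 1
    simp only [Pp, Polynomial.coeff_C_mul, P1_coeff_top, mul_one]
  have hc0 : A.coeff l.length ≠ 0 := by
    rw [hcoeff]
    intro h
    have h1 : ρ = w₀ * (l.map fun a => -(starRingEnd ℂ) a).prod := by linear_combination h
    have h2 : ‖ρ‖ ≤ ‖w₀‖ := by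
      rw [h1, norm_mul]
      have := abs_prod_neg_conj_le_one ha
      nlinarith [norm_nonneg w₀]
    rw [hρ] at h2; linarith
  have hAne : A ≠ 0 := fun h => hc0 (by simp [h])
  have hdegle : A.natDegree ≤ l.length := by
    refine le_trans (Polynomial.natDegree_sub_le _ _) (max_le ?_ ?_)
    · exact le_trans (Polynomial.natDegree_mul_le) (by simpa [Pp] using P1_natDegree_le l)
    · exact le_trans (Polynomial.natDegree_mul_le) (by simpa using Qp_natDegree_le l)
  have hdeg : A.natDegree = l.length :=
    le_antisymm hdegle (Polynomial.le_natDegree_of_ne_zero hc0)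
  -- every root of A equals w₀
  have hroot : ∀ x ∈ A.roots, x = w₀ := by
    intro x hx
    have hxr : A.eval x = 0 := Polynomial.IsRoot.eq_zero (Polynomial.isRoot_of_mem_roots hx)
    have hPQ : (Pp ρ l).eval x = w₀ * (Qp l).eval x := by
      have := hxr
      simp only [hA, Polynomial.eval_sub, Polynomial.eval_mul, Polynomial.eval_C] at this
      linear_combination this
    by_cases hxd : ‖x‖ < 1
    · -- inside disk
      have hQ := Qp_eval_ne_zero ha hxd
      apply hinj x hxd
      rw [blaschke_eq_div, hPQ, mul_div_assoc, div_self hQ, mul_one]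
    · push_neg at hxd
      exfalso
      have hQ : (Qp l).eval x ≠ 0 := by
        intro hq
        have hP : (Pp ρ l).eval x = 0 := by rw [hPQ, hq, mul_zero]
        rw [Pp_eval] at hP
        rcases mul_eq_zero.mp hP with h | h
        · have := congrArg norm h
          simp [hρ] at this
        · have hx1 : x ∈ l := by
            simpa [sub_eq_zero, eq_comm] using (List.prod_eq_zero_iff).mp h
          have := ha x hx1
          linarith
      -- |P(x)| ≥ |Q(x)| but |P(x)| = |w₀||Q(x)| < |Q(x)|
      have hge : ‖(Qp l).eval x‖ ≤ ‖(Pp ρ l).eval x‖ := by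
        rw [Pp_eval, Qp_eval, norm_mul, hρ, one_mul]
        exact list_abs_prod_le _ _ (fun a haa => factor_ge_one (ha a haa) hxd)
      have hQpos : 0 < ‖(Qp l).eval x‖ := by
        simpa [norm_pos_iff] using hQ
      rw [hPQ, norm_mul] at hge
      nlinarith
  have hsplits : A.Splits := IsAlgClosed.splits A
  have hcard : A.roots.card = l.length := by
    rw [← hdeg]
    exact (Polynomial.splits_iff_card_roots.mp hsplits)
  have hrepl : A.roots = Multiset.replicate l.length w₀ :=
    Multiset.eq_replicate.mpr ⟨hcard, hroot⟩
  refine ⟨A.leadingCoeff, by rwa [Polynomial.leadingCoeff, hdeg], ?_⟩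
  have := Polynomial.C_leadingCoeff_mul_prod_multiset_X_sub_C (p := A) (hcard.trans hdeg.symm)
  rw [hrepl] at this
  simp only [Multiset.map_replicate, Multiset.prod_replicate] at this
  exact this.symm

lemma refl_P (l : List ℂ) (z : ℂ) (hz : z ≠ 0) :
    z ^ l.length * (starRingEnd ℂ) ((l.map fun a => 1 / (starRingEnd ℂ) z - a).prod)
      = (l.map fun a => 1 - (starRingEnd ℂ) a * z).prod := by
  induction l with
  | nil => simp
  | cons a l ih =>
    simp only [List.map_cons, List.prod_cons, List.length_cons, map_mul, pow_succ]
    rw [← ih]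
    have h1 : z * (starRingEnd ℂ) (1 / (starRingEnd ℂ) z - a) = 1 - (starRingEnd ℂ) a * z := by
      simp only [map_sub, map_div₀, map_one, Complex.conj_conj]
      field_simp
    calc z ^ l.length * z * ((starRingEnd ℂ) (1 / (starRingEnd ℂ) z - a) *
          (starRingEnd ℂ) ((l.map fun a => 1 / (starRingEnd ℂ) z - a).prod))
        = (z * (starRingEnd ℂ) (1 / (starRingEnd ℂ) z - a)) * (z ^ l.length *
          (starRingEnd ℂ) ((l.map fun a => 1 / (starRingEnd ℂ) z - a).prod)) := by ring
      _ = _ := by rw [h1]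

lemma refl_Q (l : List ℂ) (z : ℂ) (hz : z ≠ 0) :
    z ^ l.length * (starRingEnd ℂ) ((l.map fun a =>
        1 - (starRingEnd ℂ) a * (1 / (starRingEnd ℂ) z)).prod)
      = (l.map fun a => z - a).prod := by
  induction l with
  | nil => simp
  | cons a l ih =>
    simp only [List.map_cons, List.prod_cons, List.length_cons, map_mul, pow_succ]
    rw [← ih]
    have h1 : z * (starRingEnd ℂ) (1 - (starRingEnd ℂ) a * (1 / (starRingEnd ℂ) z)) = z - a := by
      simp only [map_sub, map_one, map_mul, map_div₀, Complex.conj_conj]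
      field_simp
    calc z ^ l.length * z * ((starRingEnd ℂ) (1 - (starRingEnd ℂ) a * (1 / (starRingEnd ℂ) z)) *
          (starRingEnd ℂ) ((l.map fun a => 1 - (starRingEnd ℂ) a * (1 / (starRingEnd ℂ) z)).prod))
        = (z * (starRingEnd ℂ) (1 - (starRingEnd ℂ) a * (1 / (starRingEnd ℂ) z))) * (z ^ l.length *
          (starRingEnd ℂ) ((l.map fun a => 1 - (starRingEnd ℂ) a * (1 / (starRingEnd ℂ) z)).prod)) := by
          ring
      _ = _ := by rw [h1]

open Polynomial in
lemma factor_B {ρ w₀ c : ℂ} {l : List ℂ} (hρ : ‖ρ‖ = 1)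
    (hE1 : ∀ z : ℂ, (Pp ρ l).eval z - w₀ * (Qp l).eval z = c * (z - w₀) ^ l.length) :
    ∀ z : ℂ, (Qp l).eval z - (starRingEnd ℂ) w₀ * (Pp ρ l).eval z
      = ρ * (starRingEnd ℂ) c * (1 - (starRingEnd ℂ) w₀ * z) ^ l.length := by
  have hρρ : ρ * (starRingEnd ℂ) ρ = 1 := by
    rw [Complex.mul_conj]
    norm_cast
    simpa [← Complex.sq_norm, hρ] using by norm_num
  have hne : ∀ z : ℂ, z ≠ 0 → (Qp l).eval z - (starRingEnd ℂ) w₀ * (Pp ρ l).eval z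
      = ρ * (starRingEnd ℂ) c * (1 - (starRingEnd ℂ) w₀ * z) ^ l.length := by
    intro z hz
    have hE := hE1 (1 / (starRingEnd ℂ) z)
    have hconj := congrArg (starRingEnd ℂ) hE
    simp only [map_sub, map_mul, map_pow, map_div₀, map_one, Complex.conj_conj] at hconj
    -- hconj : conj (P.eval (1/z̄)) - w̄₀ * conj (Q.eval (1/z̄)) = c̄ * (1/z - w̄₀)^s
    have hmul := congrArg (fun x => z ^ l.length * x) hconj
    simp only [mul_sub] at hmul
    have hP : z ^ l.length * (starRingEnd ℂ) ((Pp ρ l).eval (1 / (starRingEnd ℂ) z))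
        = (starRingEnd ℂ) ρ * (Qp l).eval z := by
      rw [Pp_eval, map_mul, Qp_eval, ← refl_P l z hz]; ring
    have hQ : z ^ l.length * (starRingEnd ℂ) ((Qp l).eval (1 / (starRingEnd ℂ) z))
        = (starRingEnd ℂ) ρ * (Pp ρ l).eval z := by
      rw [Qp_eval, Pp_eval, ← refl_Q l z hz]
      linear_combination (-(z ^ l.length *
        (starRingEnd ℂ) ((l.map fun a => 1 - (starRingEnd ℂ) a * (1 / (starRingEnd ℂ) z)).prod))) * hρρ
    have hR : z ^ l.length * ((starRingEnd ℂ) c * (1 / z - (starRingEnd ℂ) w₀) ^ l.length)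
        = (starRingEnd ℂ) c * (1 - (starRingEnd ℂ) w₀ * z) ^ l.length := by
      have hzz : z * (1 / z - (starRingEnd ℂ) w₀) = 1 - (starRingEnd ℂ) w₀ * z := by
        field_simp
      calc z ^ l.length * ((starRingEnd ℂ) c * (1 / z - (starRingEnd ℂ) w₀) ^ l.length)
          = (starRingEnd ℂ) c * (z * (1 / z - (starRingEnd ℂ) w₀)) ^ l.length := by
            rw [mul_pow]; ring
        _ = _ := by rw [hzz]
    rw [hP, ← mul_assoc, mul_comm (z ^ l.length), mul_assoc, hQ, hR] at hmul
    have := congrArg (fun x => ρ * x) hmul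
    simp only [mul_sub, ← mul_assoc, hρρ, one_mul] at this
    linear_combination this + (starRingEnd ℂ) w₀ * Polynomial.eval z (Pp ρ l) * hρρ
  -- extend to z = 0 by polynomial identity
  set B : ℂ[X] := Qp l - C ((starRingEnd ℂ) w₀) * Pp ρ l
    - C (ρ * (starRingEnd ℂ) c) * (1 - C ((starRingEnd ℂ) w₀) * X) ^ l.length with hB
  have hBroot : ∀ z : ℂ, z ≠ 0 → B.eval z = 0 := by
    intro z hz
    simp only [hB, Polynomial.eval_sub, Polynomial.eval_mul, Polynomial.eval_C,
      Polynomial.eval_pow, Polynomial.eval_one, Polynomial.eval_X]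
    have := hne z hz
    linear_combination this
  have hB0 : B = 0 := by
    apply Polynomial.eq_zero_of_infinite_isRoot
    apply Set.Infinite.mono (s := {z : ℂ | z ≠ 0})
    · intro z hz
      exact hBroot z hz
    · exact Set.Finite.infinite_compl (Set.finite_singleton (0 : ℂ))
  intro z
  have := congrArg (Polynomial.eval z) hB0
  simp only [hB, Polynomial.eval_sub, Polynomial.eval_mul, Polynomial.eval_C,
    Polynomial.eval_pow, Polynomial.eval_one, Polynomial.eval_X, Polynomial.eval_zero] at this
  linear_combination this

lemma aut_form {ε : ℂ → ℂ} (h : IsDiskAut ε) :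
    ∃ ρa a : ℂ, ‖ρa‖ = 1 ∧ ‖a‖ < 1 ∧
      ∀ z, ε z = ρa * ((z - a) / (1 - (starRingEnd ℂ) a * z)) := by
  obtain ⟨ρa, l, hρa, ha, hlen, hfe⟩ := h
  obtain ⟨a, rfl⟩ : ∃ a, l = [a] := by
    cases l with
    | nil => simp at hlen
    | cons a l =>
      cases l with
      | nil => exact ⟨a, rfl⟩
      | cons b l => simp at hlen
  exact ⟨ρa, a, hρa, ha a (by simp), fun z => by simpa [blaschkeFun] using hfe z⟩

lemma aut_hasDerivAt {ρa a : ℂ} (hρa : ‖ρa‖ = 1) (ha : ‖a‖ < 1)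
    {z : ℂ} (hz : ‖z‖ < 1) :
    ∃ D : ℂ, D ≠ 0 ∧ HasDerivAt (fun w => ρa * ((w - a) / (1 - (starRingEnd ℂ) a * w))) D z := by
  have hd := den_ne_zero ha hz
  have h1 : HasDerivAt (fun w : ℂ => w - a) 1 z := by
    simpa using (hasDerivAt_id z).sub_const a
  have h2 : HasDerivAt (fun w : ℂ => 1 - (starRingEnd ℂ) a * w) (-(starRingEnd ℂ) a) z := by
    simpa using ((hasDerivAt_id z).const_mul ((starRingEnd ℂ) a)).const_sub 1
  have h3 := (h1.div h2 hd).const_mul ρa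
  refine ⟨_, ?_, h3⟩
  have hnum : 1 * (1 - (starRingEnd ℂ) a * z) - (z - a) * -(starRingEnd ℂ) a
      = 1 - (starRingEnd ℂ) a * a := by ring
  have hρa0 : ρa ≠ 0 := by
    intro h; rw [h] at hρa; simp at hρa
  have haa : (1 : ℂ) - (starRingEnd ℂ) a * a ≠ 0 := by
    rw [mul_comm, Complex.mul_conj]
    intro h
    have h1 : (Complex.normSq a : ℂ) = 1 := by linear_combination -h
    have := normSq_lt_one a ha
    rw [show ((Complex.normSq a : ℂ) = 1) ↔ (Complex.normSq a = 1) from by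
      exact_mod_cast Complex.ofReal_eq_one] at h1
    linarith
  apply mul_ne_zero hρa0
  apply div_ne_zero
  · rw [hnum]; exact haa
  · exact pow_ne_zero _ hd

lemma iter_mem {F : ℂ → ℂ} (hmaps : ∀ z, ‖z‖ < 1 → ‖F z‖ < 1) :
    ∀ n (z : ℂ), ‖z‖ < 1 → ‖F^[n] z‖ < 1 := by
  intro n
  induction n with
  | zero => simpa using fun z h => h
  | succ n ih =>
    intro z hz
    rw [Function.iterate_succ_apply]
    exact ih _ (hmaps z hz)

lemma iter_hasDerivAt {F : ℂ → ℂ} (hmaps : ∀ z, ‖z‖ < 1 → ‖F z‖ < 1)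
    (hdiff : ∀ z, ‖z‖ < 1 → DifferentiableAt ℂ F z) :
    ∀ n (z : ℂ), ‖z‖ < 1 →
      HasDerivAt F^[n] (∏ k ∈ Finset.range n, deriv F (F^[k] z)) z := by
  intro n
  induction n with
  | zero =>
    intro z hz
    simpa using hasDerivAt_id z
  | succ n ih =>
    intro z hz
    have h1 : HasDerivAt F (deriv F z) z := (hdiff z hz).hasDerivAt
    have h2 := (ih (F z) (hmaps z hz)).comp z h1
    have h3 : F^[n] ∘ F = F^[n + 1] := (Function.iterate_succ F n).symm
    rw [h3] at h2
    refine h2.congr_deriv ?_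
    rw [Finset.prod_range_succ']
    simp only [Function.iterate_succ_apply, Function.iterate_zero_apply]

lemma mem_unitDisk {z : ℂ} : z ∈ unitDisk ↔ ‖z‖ < 1 := by
  simp [unitDisk, Metric.mem_ball, Complex.dist_eq]

lemma star_lemma {F ε δ : ℂ → ℂ} {ρε aε ρδ aδ : ℂ} {N tt : ℕ}
    (hmaps : ∀ z, ‖z‖ < 1 → ‖F z‖ < 1)
    (hdiff : ∀ z, ‖z‖ < 1 → DifferentiableAt ℂ F z)
    (hρε : ‖ρε‖ = 1) (haε : ‖aε‖ < 1)
    (hεf : ∀ z, ε z = ρε * ((z - aε) / (1 - (starRingEnd ℂ) aε * z)))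
    (hρδ : ‖ρδ‖ = 1) (haδ : ‖aδ‖ < 1)
    (hδf : ∀ z, δ z = ρδ * ((z - aδ) / (1 - (starRingEnd ℂ) aδ * z)))
    (hN : 2 ≤ N) (htt : 2 ≤ tt)
    (hEq : Set.EqOn F^[tt] (ε ∘ (fun z => z ^ N) ∘ δ) unitDisk) :
    ∀ z, ‖z‖ < 1 → F z = aδ → z = aδ := by
  have hρδ0 : ρδ ≠ 0 := fun h => by rw [h] at hρδ; simp at hρδ
  have hδmaps : ∀ z, ‖z‖ < 1 → ‖δ z‖ < 1 := by
    intro z hz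
    rw [hδf, norm_mul, hρδ, one_mul]
    exact factor_lt_one haδ hz
  have hδzero : ∀ z, ‖z‖ < 1 → (δ z = 0 ↔ z = aδ) := by
    intro z hz
    rw [hδf, mul_eq_zero, _root_.div_eq_zero_iff, sub_eq_zero]
    have hd := den_ne_zero haδ hz
    constructor
    · rintro (h | h | h)
      · exact absurd h hρδ0
      · exact h
      · exact absurd h hd
    · intro h; right; left; exact h
  -- derivative of F^[tt] on the disk via the RHS
  have hderivRHS : ∀ z, ‖z‖ < 1 →
      (deriv F^[tt] z = 0 ↔ z = aδ) := by
    intro z hz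
    obtain ⟨Dδ, hDδ0, hDδ⟩ := aut_hasDerivAt hρδ haδ hz
    have hDδ' : HasDerivAt δ Dδ z := by
      have : δ = fun w => ρδ * ((w - aδ) / (1 - (starRingEnd ℂ) aδ * w)) := funext hδf
      rw [this]; exact hDδ
    have hδz : ‖δ z‖ < 1 := hδmaps z hz
    have hδzN : ‖(δ z) ^ N‖ < 1 := by
      rw [norm_pow]
      exact pow_lt_one₀ (norm_nonneg _) hδz (by omega)
    obtain ⟨Dε, hDε0, hDε⟩ := aut_hasDerivAt hρε haε hδzN
    have hDε' : HasDerivAt ε Dε ((δ z) ^ N) := by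
      have : ε = fun w => ρε * ((w - aε) / (1 - (starRingEnd ℂ) aε * w)) := funext hεf
      rw [this]; exact hDε
    have hpow : HasDerivAt (fun w : ℂ => w ^ N) ((N : ℂ) * (δ z) ^ (N - 1)) (δ z) :=
      hasDerivAt_pow N (δ z)
    have hcomp : HasDerivAt (ε ∘ (fun w : ℂ => w ^ N) ∘ δ)
        (Dε * ((N : ℂ) * (δ z) ^ (N - 1)) * Dδ) z :=
      (hDε'.comp (δ z) hpow).comp z hDδ'
    have hev : F^[tt] =ᶠ[nhds z] (ε ∘ (fun w : ℂ => w ^ N) ∘ δ) :=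
      Filter.eventuallyEq_of_mem ((Metric.isOpen_ball).mem_nhds (mem_unitDisk.mpr hz)) hEq
    have hder : deriv F^[tt] z = Dε * ((N : ℂ) * (δ z) ^ (N - 1)) * Dδ := by
      rw [hev.deriv_eq, hcomp.deriv]
    rw [hder]
    rw [mul_eq_zero, mul_eq_zero, mul_eq_zero]
    constructor
    · rintro ((h | h | h) | h)
      · exact absurd h hDε0
      · exact absurd h (Nat.cast_ne_zero.mpr (by omega))
      · exact (hδzero z hz).mp (pow_eq_zero_iff (show N - 1 ≠ 0 by omega) |>.mp h)
      · exact absurd h hDδ0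
    · intro h
      left; right; right
      rw [(hδzero z hz).mpr h]
      exact zero_pow (by omega)
  -- deriv F^[tt] at aδ is 0
  have h0 : deriv F^[tt] aδ = 0 := (hderivRHS aδ haδ).mpr rfl
  have hprod : ∏ k ∈ Finset.range tt, deriv F (F^[k] aδ) = 0 := by
    rw [← (iter_hasDerivAt hmaps hdiff tt aδ haδ).deriv]
    exact h0
  obtain ⟨k, hk, hck⟩ := Finset.prod_eq_zero_iff.mp hprod
  set cpt := F^[k] aδ with hcpt
  have hcmem : ‖cpt‖ < 1 := iter_mem hmaps k aδ haδ
  have hc_eq : cpt = aδ := by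
    apply (hderivRHS cpt hcmem).mp
    rw [(iter_hasDerivAt hmaps hdiff tt cpt hcmem).deriv]
    apply Finset.prod_eq_zero (Finset.mem_range.mpr (by omega : 0 < tt))
    simpa using hck
  have hderivF : deriv F aδ = 0 := by rw [← hc_eq]; exact hck
  intro z hz hFz
  apply (hderivRHS z hz).mp
  rw [(iter_hasDerivAt hmaps hdiff tt z hz).deriv]
  apply Finset.prod_eq_zero (Finset.mem_range.mpr (by omega : 1 < tt))
  simpa [hFz] using hderivF

lemma one_sub_conj_self {a : ℂ} (ha : ‖a‖ < 1) :
    (1 : ℂ) - (starRingEnd ℂ) a * a ≠ 0 := by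
  rw [mul_comm, Complex.mul_conj]
  intro h
  have h1 : (Complex.normSq a : ℂ) = 1 := by linear_combination -h
  have := normSq_lt_one a ha
  rw [show ((Complex.normSq a : ℂ) = 1) ↔ (Complex.normSq a = 1) from by
    exact_mod_cast Complex.ofReal_eq_one] at h1
  linarith


/-- If `f` is a finite Blaschke product of degree `s ≥ 2` and `f^t`
is totally ramified (associated to `z^{s^t}`) for some `t ≥ 2`, then
`f = ι_p ∘ (ρ z^s) ∘ ι_{-p}` for some `p` in the unit disk and `ρ` on the unit
circle. -/
theorem stmt_9 (f : ℂ → ℂ) (s : ℕ) (hs : 2 ≤ s) (hf : IsBlaschke s f)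
    (t : ℕ) (ht : 2 ≤ t) (htr : IsTotallyRamified (s ^ t) f^[t]) :
    ∃ p ρ : ℂ, ‖p‖ < 1 ∧ ‖ρ‖ = 1 ∧
      Set.EqOn f (iotaAut p ∘ (fun z => ρ * z ^ s) ∘ iotaAut (-p)) unitDisk := by
  obtain ⟨ρ, l, hρ, ha, hlen, hfe⟩ := hf
  obtain ⟨ε, δ, hεa, hδa, hEq⟩ := htr
  obtain ⟨ρε, aε, hρε, haε, hεf⟩ := aut_form hεa
  obtain ⟨ρδ, aδ, hρδ, haδ, hδf⟩ := aut_form hδa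
  subst hlen
  have hl : l ≠ [] := by
    intro h
    rw [h] at hs; simp at hs
  have hρ0 : ρ ≠ 0 := fun h => by rw [h] at hρ; simp at hρ
  have hmaps : ∀ z, ‖z‖ < 1 → ‖f z‖ < 1 := fun z hz => by
    rw [hfe]; exact blaschke_mapsTo hρ ha hl hz
  have hdiff : ∀ z, ‖z‖ < 1 → DifferentiableAt ℂ f z := by
    intro z hz
    have hfeq : f = fun w => (Pp ρ l).eval w / (Qp l).eval w :=
      funext fun w => (hfe w).trans (blaschke_eq_div ρ l w)
    rw [hfeq]
    exact (Pp ρ l).differentiableAt.div (Qp l).differentiableAt (Qp_eval_ne_zero ha hz)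
  have hN : 2 ≤ l.length ^ t := le_trans hs (Nat.le_self_pow (by omega) _)
  have hstar := star_lemma hmaps hdiff hρε haε hεf hρδ haδ hδf hN ht hEq
  have hinj : ∀ z : ℂ, ‖z‖ < 1 → blaschkeFun ρ l z = aδ → z = aδ := by
    intro z hz h
    exact hstar z hz (by rw [hfe]; exact h)
  obtain ⟨c, hc0, hcfac⟩ := factor_A hρ ha haδ hinj
  have he1 : ∀ z : ℂ, (Pp ρ l).eval z - aδ * (Qp l).eval z = c * (z - aδ) ^ l.length := by
    intro z
    have := congrArg (Polynomial.eval z) hcfac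
    simpa using this
  have he2 := factor_B hρ he1
  have hcbar : (starRingEnd ℂ) c ≠ 0 := by simpa using hc0
  refine ⟨aδ, c / (ρ * (starRingEnd ℂ) c), haδ, ?_, ?_⟩
  · rw [norm_div, norm_mul, hρ, one_mul, Complex.norm_conj,
      div_self (norm_ne_zero_iff.mpr hc0)]
  intro z hzmem
  have hz : ‖z‖ < 1 := mem_unitDisk.mp hzmem
  have hQz : (Qp l).eval z ≠ 0 := Qp_eval_ne_zero ha hz
  have hd : (1 : ℂ) - (starRingEnd ℂ) aδ * z ≠ 0 := den_ne_zero haδ hz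
  have hW : (Qp l).eval z - (starRingEnd ℂ) aδ * (Pp ρ l).eval z ≠ 0 := by
    rw [he2 z]
    exact mul_ne_zero (mul_ne_zero hρ0 hcbar) (pow_ne_zero _ hd)
  have hiota : iotaAut (-aδ) z = (z - aδ) / (1 - (starRingEnd ℂ) aδ * z) := by
    simp [iotaAut, sub_eq_add_neg, neg_mul]
  have hu : c / (ρ * (starRingEnd ℂ) c) * ((z - aδ) / (1 - (starRingEnd ℂ) aδ * z)) ^ l.length
      = ((Pp ρ l).eval z - aδ * (Qp l).eval z)
        / ((Qp l).eval z - (starRingEnd ℂ) aδ * (Pp ρ l).eval z) := by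
    rw [he1 z, he2 z, div_pow, div_mul_div_comm]
  set v : ℂ := ((Pp ρ l).eval z - aδ * (Qp l).eval z)
    / ((Qp l).eval z - (starRingEnd ℂ) aδ * (Pp ρ l).eval z) with hv_def
  have hvW : v * ((Qp l).eval z - (starRingEnd ℂ) aδ * (Pp ρ l).eval z)
      = (Pp ρ l).eval z - aδ * (Qp l).eval z := div_mul_cancel₀ _ hW
  have hnsq : (1 : ℂ) - (starRingEnd ℂ) aδ * aδ ≠ 0 := one_sub_conj_self haδ
  have hden : (1 : ℂ) + (starRingEnd ℂ) aδ * v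
      = (Qp l).eval z * (1 - (starRingEnd ℂ) aδ * aδ)
        / ((Qp l).eval z - (starRingEnd ℂ) aδ * (Pp ρ l).eval z) := by
    rw [eq_div_iff hW]
    linear_combination (starRingEnd ℂ) aδ * hvW
  have hdenne : (1 : ℂ) + (starRingEnd ℂ) aδ * v ≠ 0 := by
    rw [hden]
    exact div_ne_zero (mul_ne_zero hQz hnsq) hW
  have hfz : f z = (Pp ρ l).eval z / (Qp l).eval z := (hfe z).trans (blaschke_eq_div ρ l z)
  show f z = iotaAut aδ (c / (ρ * (starRingEnd ℂ) c) * (iotaAut (-aδ) z) ^ l.length)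
  rw [hiota, hu, iotaAut, hfz, div_eq_div_iff hQz hdenne]
  linear_combination (-1 : ℂ) * hvW
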